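/- Let f : ℝ^d → ℝ be L-smooth and convex with minimizer x*, and let x_{t+1} = x_t − γ∇f(x_t) with 0 < γ ≤ 1/L. If ‖x_0 − x*‖² ≤ C, then min_{0 ≤ t ≤ T−1} (f(x_t) − f(x*)) ≤ C/(γT) for every T ≥ 1. -/

import Mathlib

open scoped RealInnerProductSpace
open Set

variable {d : ℕ}

local notation "E" => EuclideanSpace ℝ (Fin d)

/-- Derivative along a line. -/
lemma gd_line_hasDerivAt (f : E → ℝ) (f' : E → E)
    (hdiff : ∀ x, HasGradientAt f (f' x) x) (x v : E) (s : ℝ) :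
    HasDerivAt (fun s : ℝ => f (x + s • v)) ⟪f' (x + s • v), v⟫ s := by
  have hc : HasDerivAt (fun s : ℝ => x + s • v) v s := by
    simpa using ((hasDerivAt_id s).smul_const v).const_add x
  have := ((hdiff (x + s • v)).hasFDerivAt).comp_hasDerivAt s hc
  simpa [InnerProductSpace.toDual_apply_apply, Function.comp_def] using this

/-- Gradient inequality for convex functions. -/
lemma gd_convex_grad (f : E → ℝ) (f' : E → E)
    (hdiff : ∀ x, HasGradientAt f (f' x) x) (hconv : ConvexOn ℝ Set.univ f)
    (x y : E) : f x + ⟪f' x, y - x⟫ ≤ f y := by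
  set v := y - x with hv
  have hg0 : HasDerivAt (fun s : ℝ => f (x + s • v)) ⟪f' x, v⟫ 0 := by
    have := gd_line_hasDerivAt f f' hdiff x v 0
    simpa using this
  have htend : Filter.Tendsto (slope (fun s : ℝ => f (x + s • v)) 0) (nhdsWithin 0 (Ioi 0))
      (nhds ⟪f' x, v⟫) :=
    (hasDerivAt_iff_tendsto_slope.1 hg0).mono_left
      (nhdsWithin_mono 0 (fun t ht => ne_of_gt ht))
  have hbound : ∀ᶠ t in nhdsWithin (0:ℝ) (Ioi 0),
      slope (fun s : ℝ => f (x + s • v)) 0 t ≤ f y - f x := by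
    filter_upwards [Ioo_mem_nhdsGT_of_mem (Set.left_mem_Ico.2 one_pos)] with t ht
    have ht0 : (0:ℝ) < t := ht.1
    have ht1 : t ≤ 1 := le_of_lt ht.2
    have hcx : f (x + t • v) ≤ (1 - t) * f x + t * f y := by
      have h := hconv.2 (Set.mem_univ x) (Set.mem_univ y)
        (by linarith : (0:ℝ) ≤ 1 - t) (le_of_lt ht0) (by ring)
      have hxy : (1 - t) • x + t • y = x + t • v := by
        rw [hv]; module
      simpa [hxy, smul_eq_mul] using h
    rw [slope_def_field]
    simp only [zero_smul, add_zero, sub_zero]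
    rw [div_le_iff₀ ht0]
    nlinarith
  have := le_of_tendsto htend hbound
  linarith [this]

/-- Descent lemma. -/
lemma gd_descent (f : E → ℝ) (f' : E → E)
    (hdiff : ∀ x, HasGradientAt f (f' x) x)
    (L : ℝ) (hL : 0 < L) (hlip : ∀ x y, ‖f' x - f' y‖ ≤ L * ‖x - y‖)
    (x y : E) : f y ≤ f x + ⟪f' x, y - x⟫ + L / 2 * ‖y - x‖ ^ 2 := by
  set v := y - x with hv
  have hf'cont : Continuous f' := by
    apply LipschitzWith.continuous (K := L.toNNReal)
    apply LipschitzWith.of_dist_le_mul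
    intro a b
    simpa [dist_eq_norm, Real.coe_toNNReal _ hL.le] using hlip a b
  have hcont : Continuous fun s : ℝ => ⟪f' (x + s • v), v⟫ := by
    exact (Continuous.inner (hf'cont.comp (by continuity)) continuous_const)
  have hint : ∫ s in (0:ℝ)..1, ⟪f' (x + s • v), v⟫ = f (x + (1:ℝ) • v) - f (x + (0:ℝ) • v) := by
    exact intervalIntegral.integral_eq_sub_of_hasDerivAt
      (fun s _ => gd_line_hasDerivAt f f' hdiff x v s)
      (hcont.intervalIntegrable 0 1)
  have hmono : ∫ s in (0:ℝ)..1, ⟪f' (x + s • v), v⟫ ≤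
      ∫ s in (0:ℝ)..1, (⟪f' x, v⟫ + L * s * ‖v‖ ^ 2) := by
    apply intervalIntegral.integral_mono_on zero_le_one
      (hcont.intervalIntegrable 0 1)
      ((by continuity : Continuous fun s : ℝ => ⟪f' x, v⟫ + L * s * ‖v‖ ^ 2).intervalIntegrable 0 1)
    intro s hs
    have h1 : ⟪f' (x + s • v) - f' x, v⟫ ≤ ‖f' (x + s • v) - f' x‖ * ‖v‖ :=
      real_inner_le_norm _ _
    have h2 : ‖f' (x + s • v) - f' x‖ ≤ L * (s * ‖v‖) := by
      have := hlip (x + s • v) x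
      simpa [norm_smul, abs_of_nonneg hs.1, mul_assoc] using this
    have h3 : ⟪f' (x + s • v), v⟫ - ⟪f' x, v⟫ = ⟪f' (x + s • v) - f' x, v⟫ := by
      rw [inner_sub_left]
    nlinarith [norm_nonneg v, norm_nonneg (f' (x + s • v) - f' x)]
  have hval : ∫ s in (0:ℝ)..1, (⟪f' x, v⟫ + L * s * ‖v‖ ^ 2) = ⟪f' x, v⟫ + L / 2 * ‖v‖ ^ 2 := by
    have heq : (fun s : ℝ => ⟪f' x, v⟫ + L * s * ‖v‖ ^ 2)
        = fun s : ℝ => ⟪f' x, v⟫ + (L * ‖v‖ ^ 2) * s := by funext s; ring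
    rw [heq, intervalIntegral.integral_add (g := fun s : ℝ => (L * ‖v‖ ^ 2) * s) intervalIntegrable_const
      ((continuous_const.mul continuous_id').intervalIntegrable 0 1),
      intervalIntegral.integral_const_mul, integral_id, intervalIntegral.integral_const]
    simp; ring
  have h1v : x + (1:ℝ) • v = y := by rw [hv]; module
  have h0v : x + (0:ℝ) • v = x := by simp
  rw [h1v, h0v] at hint
  linarith [hmono.trans_eq hval, hint.symm.le, hint.le]

/-- Strengthened gradient inequality. -/
lemma gd_grad_strong (f : E → ℝ) (f' : E → E)
    (hdiff : ∀ x, HasGradientAt f (f' x) x) (hconv : ConvexOn ℝ Set.univ f)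
    (L : ℝ) (hL : 0 < L) (hlip : ∀ x y, ‖f' x - f' y‖ ≤ L * ‖x - y‖)
    (x y : E) :
    f x + ⟪f' x, y - x⟫ + 1 / (2 * L) * ‖f' x - f' y‖ ^ 2 ≤ f y := by
  set z := y + (1 / L) • (f' x - f' y) with hz
  have hB := gd_convex_grad f f' hdiff hconv x z
  have hC := gd_descent f f' hdiff L hL hlip y z
  have e1 : ⟪f' y, z - y⟫ = (1 / L) * ⟪f' y, f' x - f' y⟫ := by
    rw [hz, add_sub_cancel_left, real_inner_smul_right]
  have e2 : ‖z - y‖ ^ 2 = (1 / L) ^ 2 * ‖f' x - f' y‖ ^ 2 := by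
    rw [hz, add_sub_cancel_left, norm_smul, Real.norm_eq_abs,
      abs_of_nonneg (by positivity : (0:ℝ) ≤ 1 / L), mul_pow]
  have e3 : ⟪f' x, z - x⟫ = ⟪f' x, y - x⟫ + (1 / L) * ⟪f' x, f' x - f' y⟫ := by
    rw [hz, show y + (1 / L) • (f' x - f' y) - x = (y - x) + (1 / L) • (f' x - f' y) by abel,
      inner_add_right, real_inner_smul_right]
  have e4 : ⟪f' x, f' x - f' y⟫ - ⟪f' y, f' x - f' y⟫ = ‖f' x - f' y‖ ^ 2 := by
    rw [← inner_sub_left, real_inner_self_eq_norm_sq]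
  rw [e1, e2] at hC
  rw [e3] at hB
  have key2 : (1 / L) * ⟪f' x, f' x - f' y⟫ - (1 / L) * ⟪f' y, f' x - f' y⟫
      = (1 / L) * ‖f' x - f' y‖ ^ 2 := by rw [← mul_sub, e4]
  have key3 : L / 2 * ((1 / L) ^ 2 * ‖f' x - f' y‖ ^ 2) = 1 / (2 * L) * ‖f' x - f' y‖ ^ 2 := by
    field_simp
  have key4 : (1 / L) * ‖f' x - f' y‖ ^ 2 = 2 * (1 / (2 * L) * ‖f' x - f' y‖ ^ 2) := by
    field_simp
  linarith [hB, hC, key2, key3, key4]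

/-- Cocoercivity. -/
lemma gd_coco (f : E → ℝ) (f' : E → E)
    (hdiff : ∀ x, HasGradientAt f (f' x) x) (hconv : ConvexOn ℝ Set.univ f)
    (L : ℝ) (hL : 0 < L) (hlip : ∀ x y, ‖f' x - f' y‖ ≤ L * ‖x - y‖)
    (x y : E) :
    1 / L * ‖f' x - f' y‖ ^ 2 ≤ ⟪f' x - f' y, x - y⟫ := by
  have h1 := gd_grad_strong f f' hdiff hconv L hL hlip x y
  have h2 := gd_grad_strong f f' hdiff hconv L hL hlip y x
  have e1 : ⟪f' x, y - x⟫ = - ⟪f' x, x - y⟫ := by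
    rw [← inner_neg_right]; congr 1; abel
  have e3 : ‖f' y - f' x‖ = ‖f' x - f' y‖ := norm_sub_rev _ _
  have e4 : ⟪f' x - f' y, x - y⟫ = ⟪f' x, x - y⟫ - ⟪f' y, x - y⟫ := inner_sub_left _ _ _
  rw [e1] at h1
  rw [e3] at h2
  have key4 : (1 / L) * ‖f' x - f' y‖ ^ 2 = 2 * (1 / (2 * L) * ‖f' x - f' y‖ ^ 2) := by
    field_simp
  linarith [h1, h2, e4, key4]

/-- Best-iterate convergence rate of gradient descent on an L-smooth convex function. -/
theorem gd_best_iterate_rate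
    {d : ℕ} (f : EuclideanSpace ℝ (Fin d) → ℝ)
    (f' : EuclideanSpace ℝ (Fin d) → EuclideanSpace ℝ (Fin d))
    (hdiff : ∀ x, HasGradientAt f (f' x) x)
    (hconv : ConvexOn ℝ Set.univ f)
    (L : ℝ) (hL : 0 < L)
    (hlip : ∀ x y, ‖f' x - f' y‖ ≤ L * ‖x - y‖)
    (xstar : EuclideanSpace ℝ (Fin d))
    (hmin : ∀ z, f xstar ≤ f z)
    (γ : ℝ) (hγ : 0 < γ) (hγL : γ ≤ 1 / L)
    (x : ℕ → EuclideanSpace ℝ (Fin d))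
    (hiter : ∀ t, x (t + 1) = x t - γ • f' (x t))
    (C : ℝ) (hC : 0 < C) (h0 : ‖x 0 - xstar‖ ^ 2 ≤ C) :
    ∀ T : ℕ, 1 ≤ T → ∃ t < T, f (x t) - f xstar ≤ C / (γ * T) := by
  -- gradient vanishes at the minimizer
  have hstar : f' xstar = 0 := by
    have hloc : IsLocalMin f xstar := Filter.Eventually.of_forall hmin
    have := hloc.hasFDerivAt_eq_zero (hdiff xstar).hasFDerivAt
    have h2 : InnerProductSpace.toDual ℝ _ (f' xstar) = InnerProductSpace.toDual ℝ _ 0 := by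
      rw [this, map_zero]
    exact (InnerProductSpace.toDual ℝ _).injective h2
  -- one-step decrease of the squared distance
  have key : ∀ t, ‖x (t + 1) - xstar‖ ^ 2 ≤ ‖x t - xstar‖ ^ 2 - γ * (f (x t) - f xstar) := by
    intro t
    set g := f' (x t) with hg
    have hexp : x (t + 1) - xstar = (x t - xstar) - γ • g := by
      rw [hiter t]; abel
    have hsq : ‖x (t + 1) - xstar‖ ^ 2
        = ‖x t - xstar‖ ^ 2 - 2 * (γ * ⟪x t - xstar, g⟫) + γ ^ 2 * ‖g‖ ^ 2 := by
      rw [hexp, norm_sub_sq_real, real_inner_smul_right, norm_smul, Real.norm_eq_abs,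
        abs_of_nonneg hγ.le, mul_pow]
    -- cocoercivity at (x t, xstar)
    have hco := gd_coco f f' hdiff hconv L hL hlip (x t) xstar
    rw [hstar, sub_zero] at hco
    have hco' : γ * ‖g‖ ^ 2 ≤ ⟪g, x t - xstar⟫ := le_trans (by nlinarith [sq_nonneg ‖g‖]) hco
    -- convexity inequality at (x t, xstar)
    have hcv := gd_convex_grad f f' hdiff hconv (x t) xstar
    have hcv' : f (x t) - f xstar ≤ ⟪g, x t - xstar⟫ := by
      have e : ⟪g, xstar - x t⟫ = - ⟪g, x t - xstar⟫ := by
        rw [← inner_neg_right]; congr 1; abel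
      rw [e] at hcv; linarith
    have hsym : ⟪x t - xstar, g⟫ = ⟪g, x t - xstar⟫ := real_inner_comm _ _
    rw [hsq, hsym]
    nlinarith [hco', hcv', sq_nonneg ‖g‖]
  -- summed inequality
  have hsum : ∀ T : ℕ, ‖x T - xstar‖ ^ 2
      + γ * ∑ t ∈ Finset.range T, (f (x t) - f xstar) ≤ C := by
    intro T
    induction T with
    | zero => simpa using h0
    | succ n ih =>
      rw [Finset.sum_range_succ]
      have := key n
      nlinarith [this, ih]
  intro T hT
  by_contra hcon
  push_neg at hcon
  have hTpos : (0:ℝ) < T := by exact_mod_cast hT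
  have hlt : (T : ℝ) * (C / (γ * T)) < ∑ t ∈ Finset.range T, (f (x t) - f xstar) := by
    have : ∑ t ∈ Finset.range T, (C / (γ * T)) < ∑ t ∈ Finset.range T, (f (x t) - f xstar) := by
      apply Finset.sum_lt_sum_of_nonempty
      · exact Finset.nonempty_range_iff.2 (by omega)
      · intro t ht
        exact hcon t (Finset.mem_range.1 ht)
    simpa [Finset.sum_const, Finset.card_range, mul_comm] using this
  have hsumT := hsum T
  have hval : (T : ℝ) * (C / (γ * T)) = C / γ := by
    field_simp
  have : C / γ < ∑ t ∈ Finset.range T, (f (x t) - f xstar) := by rw [← hval]; exact hlt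
  have hfin : γ * ∑ t ∈ Finset.range T, (f (x t) - f xstar) ≤ C := by
    nlinarith [sq_nonneg ‖x T - xstar‖, hsumT]
  have : C < γ * ∑ t ∈ Finset.range T, (f (x t) - f xstar) := by
    rw [div_lt_iff₀ hγ] at this
    nlinarith [this]
  linarith
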